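/- For every r > 0, ∫_D (y₁ y₂ / |y|⁴) dy ≤ 8, where D := ((0,2r) × (r/2,∞)) ∪ ((r/2,∞) × (0,2r)) ⊆ ℝ²; in particular ∫_{(0,2r) × (r/2,∞)} (y₁ / |y|³) dy ≤ 4. -/

import Mathlib

open MeasureTheory Real Filter Set

noncomputable section

lemma L1 (r : ℝ) (hr : 0 < r) :
    ∫⁻ y in Ioi (r / 2), ENNReal.ofReal ((y ^ 3)⁻¹) = ENNReal.ofReal (2 / r ^ 2) := by
  have hc : (0 : ℝ) < r / 2 := by positivity
  have heq : EqOn (fun x : ℝ => x ^ (-3 : ℝ)) (fun x : ℝ => (x ^ 3)⁻¹) (Ioi (r / 2)) := by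
    intro x hx
    have hx0 : 0 < x := lt_trans hc hx
    simp only
    rw [show (-3 : ℝ) = -((3 : ℕ) : ℝ) by norm_num, Real.rpow_neg hx0.le, Real.rpow_natCast]
  have hint : IntegrableOn (fun y : ℝ => (y ^ 3)⁻¹) (Ioi (r / 2)) :=
    (integrableOn_Ioi_rpow_of_lt (by norm_num) hc).congr_fun heq measurableSet_Ioi
  rw [← ofReal_integral_eq_lintegral_ofReal hint
    ((ae_restrict_iff' measurableSet_Ioi).2 (ae_of_all _ fun y hy => by
      have : 0 < y := lt_trans hc hy
      positivity))]
  congr 1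
  rw [← setIntegral_congr_fun measurableSet_Ioi heq,
    integral_Ioi_rpow_of_lt (by norm_num) hc]
  rw [show (-3 : ℝ) + 1 = -2 by norm_num]
  rw [show (-2 : ℝ) = -((2 : ℕ) : ℝ) by norm_num, Real.rpow_neg hc.le, Real.rpow_natCast]
  field_simp
  ring

lemma L2 (r : ℝ) (hr : 0 < r) :
    ∫⁻ x in Ioo (0 : ℝ) (2 * r), ENNReal.ofReal x = ENNReal.ofReal (2 * r ^ 2) := by
  have h2r : (0 : ℝ) < 2 * r := by positivity
  have hint : IntegrableOn (fun x : ℝ => x) (Ioo (0 : ℝ) (2 * r)) :=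
    Iff.mp integrableOn_Ioc_iff_integrableOn_Ioo intervalIntegral.intervalIntegrable_id.1
  rw [← ofReal_integral_eq_lintegral_ofReal hint
    ((ae_restrict_iff' measurableSet_Ioo).2 (ae_of_all _ fun y hy => hy.1.le))]
  congr 1
  rw [← integral_Ioc_eq_integral_Ioo, ← intervalIntegral.integral_of_le h2r.le,
    integral_id]
  ring

lemma key (r : ℝ) (hr : 0 < r) :
    ∫⁻ p : ℝ × ℝ in Ioo (0 : ℝ) (2 * r) ×ˢ Ioi (r / 2),
      ENNReal.ofReal (p.1 / p.2 ^ 3) = ENNReal.ofReal 4 := by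
  have hmeas : MeasurableSet (Ioo (0 : ℝ) (2 * r) ×ˢ Ioi (r / 2)) :=
    measurableSet_Ioo.prod measurableSet_Ioi
  have hcongr : ∀ p : ℝ × ℝ, p ∈ Ioo (0 : ℝ) (2 * r) ×ˢ Ioi (r / 2) →
      ENNReal.ofReal (p.1 / p.2 ^ 3)
        = ENNReal.ofReal p.1 * ENNReal.ofReal ((p.2 ^ 3)⁻¹) := by
    intro p hp
    rw [div_eq_mul_inv, ENNReal.ofReal_mul hp.1.1.le]
  rw [setLIntegral_congr_fun hmeas (fun p hp => hcongr p hp)]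
  have hg : Measurable fun p : ℝ × ℝ =>
      ENNReal.ofReal p.1 * ENNReal.ofReal ((p.2 ^ 3)⁻¹) :=
    (measurable_fst.ennreal_ofReal).mul
      (((measurable_snd.pow_const 3).inv).ennreal_ofReal)
  rw [show (volume : Measure (ℝ × ℝ)).restrict (Ioo (0 : ℝ) (2 * r) ×ˢ Ioi (r / 2))
      = ((volume : Measure ℝ).restrict (Ioo (0 : ℝ) (2 * r))).prod
        ((volume : Measure ℝ).restrict (Ioi (r / 2))) by
    rw [Measure.prod_restrict, ← Measure.volume_eq_prod]]
  rw [lintegral_prod _ hg.aemeasurable]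
  simp only
  have hm1 : Measurable fun y : ℝ => ENNReal.ofReal ((y ^ 3)⁻¹) :=
    ((measurable_id'.pow_const 3).inv).ennreal_ofReal
  have hm2 : Measurable fun y : ℝ => ENNReal.ofReal y := measurable_id'.ennreal_ofReal
  have hinner : ∀ x : ℝ,
      (∫⁻ y in Ioi (r / 2), ENNReal.ofReal x * ENNReal.ofReal ((y ^ 3)⁻¹))
        = ENNReal.ofReal x * ENNReal.ofReal (2 / r ^ 2) := by
    intro x
    rw [lintegral_const_mul _ hm1, L1 r hr]
  simp only [hinner]
  rw [lintegral_mul_const _ hm2, L2 r hr,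
    ← ENNReal.ofReal_mul (by positivity)]
  congr 1
  field_simp
  ring

lemma key' (r : ℝ) (hr : 0 < r) :
    ∫⁻ p : ℝ × ℝ in Ioi (r / 2) ×ˢ Ioo (0 : ℝ) (2 * r),
      ENNReal.ofReal (p.2 / p.1 ^ 3) = ENNReal.ofReal 4 := by
  have hmeas : MeasurableSet (Ioi (r / 2) ×ˢ Ioo (0 : ℝ) (2 * r)) :=
    measurableSet_Ioi.prod measurableSet_Ioo
  have hcongr : ∀ p : ℝ × ℝ, p ∈ Ioi (r / 2) ×ˢ Ioo (0 : ℝ) (2 * r) →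
      ENNReal.ofReal (p.2 / p.1 ^ 3)
        = ENNReal.ofReal ((p.1 ^ 3)⁻¹) * ENNReal.ofReal p.2 := by
    intro p hp
    have h1 : (0:ℝ) < p.1 := lt_trans (by positivity) hp.1
    rw [div_eq_mul_inv, mul_comm, ENNReal.ofReal_mul (by positivity)]
  rw [setLIntegral_congr_fun hmeas (fun p hp => hcongr p hp)]
  have hg : Measurable fun p : ℝ × ℝ =>
      ENNReal.ofReal ((p.1 ^ 3)⁻¹) * ENNReal.ofReal p.2 :=
    (((measurable_fst.pow_const 3).inv).ennreal_ofReal).mul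
      (measurable_snd.ennreal_ofReal)
  rw [show (volume : Measure (ℝ × ℝ)).restrict (Ioi (r / 2) ×ˢ Ioo (0 : ℝ) (2 * r))
      = ((volume : Measure ℝ).restrict (Ioi (r / 2))).prod
        ((volume : Measure ℝ).restrict (Ioo (0 : ℝ) (2 * r))) by
    rw [Measure.prod_restrict, ← Measure.volume_eq_prod]]
  rw [lintegral_prod _ hg.aemeasurable]
  simp only
  have hm1 : Measurable fun y : ℝ => ENNReal.ofReal ((y ^ 3)⁻¹) :=
    ((measurable_id'.pow_const 3).inv).ennreal_ofReal
  have hm2 : Measurable fun y : ℝ => ENNReal.ofReal y := measurable_id'.ennreal_ofReal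
  have hinner : ∀ x : ℝ,
      (∫⁻ y in Ioo (0 : ℝ) (2 * r), ENNReal.ofReal ((x ^ 3)⁻¹) * ENNReal.ofReal y)
        = ENNReal.ofReal ((x ^ 3)⁻¹) * ENNReal.ofReal (2 * r ^ 2) := by
    intro x
    rw [lintegral_const_mul _ hm2, L2 r hr]
  simp only [hinner]
  rw [lintegral_mul_const _ hm1, L1 r hr,
    ← ENNReal.ofReal_mul (by positivity)]
  congr 1
  field_simp
  ring

lemma conv (f : ℝ × ℝ → ℝ) (s : Set (ℝ × ℝ)) (hs : MeasurableSet s)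
    (hm : AEStronglyMeasurable f (volume.restrict s))
    (h0 : ∀ p ∈ s, 0 ≤ f p) {C : ℝ} (hC : 0 ≤ C)
    (h : ∫⁻ p in s, ENNReal.ofReal (f p) ≤ ENNReal.ofReal C) :
    ∫ p in s, f p ≤ C := by
  rw [integral_eq_lintegral_of_nonneg_ae ((ae_restrict_iff' hs).2 (ae_of_all _ h0)) hm]
  exact ENNReal.toReal_le_of_le_ofReal hC h

theorem statement5 (r : ℝ) (hr : 0 < r) :
    (∫ y in (Ioo (0 : ℝ) (2 * r) ×ˢ Ioi (r / 2)) ∪ (Ioi (r / 2) ×ˢ Ioo (0 : ℝ) (2 * r)),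
        y.1 * y.2 / (y.1 ^ 2 + y.2 ^ 2) ^ 2) ≤ 8
    ∧ (∫ y in (Ioo (0 : ℝ) (2 * r) ×ˢ Ioi (r / 2)),
        y.1 / Real.sqrt (y.1 ^ 2 + y.2 ^ 2) ^ 3) ≤ 4 := by
  have h2 : (0 : ℝ) < r / 2 := by positivity
  have hA : MeasurableSet (Ioo (0 : ℝ) (2 * r) ×ˢ Ioi (r / 2)) :=
    measurableSet_Ioo.prod measurableSet_Ioi
  have hB : MeasurableSet (Ioi (r / 2) ×ˢ Ioo (0 : ℝ) (2 * r)) :=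
    measurableSet_Ioi.prod measurableSet_Ioo
  constructor
  · apply conv _ _ (hA.union hB)
    · exact (measurable_fst.mul measurable_snd |>.div
        (((measurable_fst.pow_const 2).add (measurable_snd.pow_const 2)).pow_const 2)
        ).aestronglyMeasurable.restrict
    · rintro p (hp | hp)
      · have h1 : 0 < p.1 := hp.1.1
        have h2' : 0 < p.2 := lt_trans h2 hp.2
        positivity
      · have h1 : 0 < p.1 := lt_trans h2 hp.1
        have h2' : 0 < p.2 := hp.2.1
        positivity
    · norm_num
    · calc ∫⁻ p in (Ioo (0 : ℝ) (2 * r) ×ˢ Ioi (r / 2)) ∪ (Ioi (r / 2) ×ˢ Ioo (0 : ℝ) (2 * r)),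
            ENNReal.ofReal (p.1 * p.2 / (p.1 ^ 2 + p.2 ^ 2) ^ 2)
          ≤ (∫⁻ p in Ioo (0 : ℝ) (2 * r) ×ˢ Ioi (r / 2),
              ENNReal.ofReal (p.1 * p.2 / (p.1 ^ 2 + p.2 ^ 2) ^ 2))
            + ∫⁻ p in Ioi (r / 2) ×ˢ Ioo (0 : ℝ) (2 * r),
              ENNReal.ofReal (p.1 * p.2 / (p.1 ^ 2 + p.2 ^ 2) ^ 2) :=
            lintegral_union_le _ _ _
        _ ≤ ENNReal.ofReal 4 + ENNReal.ofReal 4 := by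
            gcongr
            · rw [← key r hr]
              apply setLIntegral_mono' hA
              intro p hp
              apply ENNReal.ofReal_le_ofReal
              have h1 : 0 < p.1 := hp.1.1
              have h2' : 0 < p.2 := lt_trans h2 hp.2
              rw [div_le_div_iff₀ (by positivity) (by positivity)]
              nlinarith [mul_nonneg h1.le (pow_nonneg h1.le 4),
                mul_nonneg (mul_nonneg h1.le (sq_nonneg p.1)) (sq_nonneg p.2)]
            · rw [← key' r hr]
              apply setLIntegral_mono' hB
              intro p hp
              apply ENNReal.ofReal_le_ofReal
              have h1 : 0 < p.1 := lt_trans h2 hp.1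
              have h2' : 0 < p.2 := hp.2.1
              rw [div_le_div_iff₀ (by positivity) (by positivity)]
              nlinarith [mul_nonneg h2'.le (pow_nonneg h2'.le 4),
                mul_nonneg (mul_nonneg h2'.le (sq_nonneg p.2)) (sq_nonneg p.1)]
        _ = ENNReal.ofReal 8 := by
            rw [← ENNReal.ofReal_add] <;> norm_num
  · apply conv _ _ hA
    · exact (measurable_fst.div
        ((Real.continuous_sqrt.measurable.comp
          ((measurable_fst.pow_const 2).add (measurable_snd.pow_const 2))).pow_const 3)
        ).aestronglyMeasurable.restrict
    · intro p hp
      have h1 : 0 < p.1 := hp.1.1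
      have hs : 0 ≤ Real.sqrt (p.1 ^ 2 + p.2 ^ 2) := Real.sqrt_nonneg _
      positivity
    · norm_num
    · rw [← key r hr]
      apply setLIntegral_mono' hA
      intro p hp
      apply ENNReal.ofReal_le_ofReal
      have h1 : 0 < p.1 := hp.1.1
      have h2' : 0 < p.2 := lt_trans h2 hp.2
      have hle : p.2 ≤ Real.sqrt (p.1 ^ 2 + p.2 ^ 2) := by
        have hq := Real.sqrt_le_sqrt (show p.2 ^ 2 ≤ p.1 ^ 2 + p.2 ^ 2 by nlinarith)
        rwa [Real.sqrt_sq h2'.le] at hq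
      have h3 : p.2 ^ 3 ≤ Real.sqrt (p.1 ^ 2 + p.2 ^ 2) ^ 3 := pow_le_pow_left₀ h2'.le hle 3
      exact div_le_div_of_nonneg_left h1.le (pow_pos h2' 3) h3
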